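/- Let (X,d,μ) be a space of homogeneous type with open balls, and let E ⊆ X be weakly porous with respect to the Macías–Segovia quasi-distance δ with doubling ρ_{δ,E}. Then μ(closure(E)) = 0. -/

import Mathlib

open MeasureTheory ENNReal Set

namespace WPA1

variable {X : Type*}

/-- `d` is a quasi-distance on `X` with triangular constant `K`. -/
def QD (d : X → X → ℝ) (K : ℝ) : Prop :=
  1 ≤ K ∧ (∀ x y, 0 ≤ d x y) ∧ (∀ x y, d x y = 0 ↔ x = y) ∧
    (∀ x y, d x y = d y x) ∧ ∀ x y z, d x z ≤ K * (d x y + d y z)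

/-- The `d`-ball of center `x` and radius `r`. -/
def ball (d : X → X → ℝ) (x : X) (r : ℝ) : Set X := {y | d x y < r}

/-- The optimal (least) triangular constant of `d`. -/
noncomputable def Kopt (d : X → X → ℝ) : ℝ := sInf {K | QD d K}

/-- Distance from a point to a set: `d(x,E) = inf_{e ∈ E} d(x,e)`. -/
noncomputable def distE (d : X → X → ℝ) (E : Set X) (x : X) : ℝ :=
  sInf ((d x) '' E)

/-- The maximal `E`-free hole function
`ρ_{d,E}(B_d(x,r)) = sup {0 < s ≤ 2Kr : ∃ y, B_d(y,s) ⊆ B_d(x,r) \ E}`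
(with value `0` when the set is empty, by `Real.sSup` conventions). -/
noncomputable def hole (d : X → X → ℝ) (K : ℝ) (E : Set X) (x : X) (r : ℝ) : ℝ :=
  sSup {s | 0 < s ∧ s ≤ 2 * K * r ∧ ∃ y, ball d y s ⊆ ball d x r \ E}

/-- The maximal hole function `ρ_{d,E}` is doubling with constant `C`. -/
def HoleDoubling (d : X → X → ℝ) (K : ℝ) (E : Set X) (C : ℝ) : Prop :=
  ∀ x r, 0 < r → hole d K E x (2 * r) ≤ C * hole d K E x r

/-- The `d`-balls are open and form neighborhood bases: the ambient topology is
the one induced by the quasi-distance `d`. -/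
def BallsBasis [TopologicalSpace X] (d : X → X → ℝ) : Prop :=
  (∀ x r, IsOpen (ball d x r)) ∧ ∀ x, ∀ U ∈ nhds x, ∃ r > 0, ball d x r ⊆ U

/-- The measure `μ` is doubling (with constant `A`) on `d`-balls, which have
positive finite measure; i.e. `(X,d,μ)` is a space of homogeneous type. -/
def DoublingBalls [MeasurableSpace X] (μ : Measure X) (d : X → X → ℝ) (A : ℝ) : Prop :=
  ∀ x r, 0 < r → 0 < μ (ball d x r) ∧ μ (ball d x r) < ⊤ ∧
    μ (ball d x (2 * r)) ≤ ENNReal.ofReal A * μ (ball d x r)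

/-- `E` is `(σ,γ)`-weakly porous with respect to `d` and `μ`. -/
def WeaklyPorousWith [MeasurableSpace X] (μ : Measure X) (d : X → X → ℝ) (K : ℝ)
    (E : Set X) (σ γ : ℝ) : Prop :=
  ∀ x r, 0 < r → ∃ (n : ℕ) (c : Fin n → X) (ρ : Fin n → ℝ),
    (∀ i j, i ≠ j → Disjoint (ball d (c i) (ρ i)) (ball d (c j) (ρ j))) ∧
    (∀ i, ball d (c i) (ρ i) ⊆ ball d x r \ E) ∧
    (∀ i, γ * hole d K E x r ≤ ρ i) ∧
    (∀ i, ρ i ≤ 2 * K * r) ∧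
    ENNReal.ofReal σ * μ (ball d x r) ≤ ∑ i, μ (ball d (c i) (ρ i))

/-- `E` is weakly porous with respect to `d` and `μ`. -/
def WeaklyPorous [MeasurableSpace X] (μ : Measure X) (d : X → X → ℝ) (K : ℝ)
    (E : Set X) : Prop :=
  ∃ σ γ : ℝ, σ ∈ Set.Ioo (0:ℝ) 1 ∧ γ ∈ Set.Ioo (0:ℝ) 1 ∧ WeaklyPorousWith μ d K E σ γ

/-- The weight `d(·,E)^{-α}`, valued in `ℝ≥0∞` (so it is `∞` on `{d(·,E)=0}`). -/
noncomputable def wgt (d : X → X → ℝ) (E : Set X) (α : ℝ) (x : X) : ℝ≥0∞ :=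
  ENNReal.ofReal (distE d E x) ^ (-α)

/-- `w` is an `A₁(X,d,μ)`-weight: `w` is locally integrable and the mean value of `w`
over every `d`-ball is bounded by a constant times its essential infimum there. -/
def MemA1 [MeasurableSpace X] (μ : Measure X) (d : X → X → ℝ) (w : X → ℝ≥0∞) : Prop :=
  (∀ x r, 0 < r → ∫⁻ y in ball d x r, w y ∂μ < ⊤) ∧
  ∃ C : ℝ, 0 < C ∧ ∀ x r, 0 < r →
    ∫⁻ y in ball d x r, w y ∂μ ≤
      ENNReal.ofReal C * essInf w (μ.restrict (ball d x r)) * μ (ball d x r)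


section basics

variable {δ : X → X → ℝ} {Kδ : ℝ} (hδ : QD δ Kδ)

lemma mem_ball {x y : X} {r : ℝ} : y ∈ ball δ x r ↔ δ x y < r := Iff.rfl

omit hδ in
lemma ball_mono {x : X} {r r' : ℝ} (h : r ≤ r') : ball δ x r ⊆ ball δ x r' :=
  fun _ hy => lt_of_lt_of_le hy h

include hδ

lemma Kpos : 0 < Kδ := lt_of_lt_of_le one_pos hδ.1
lemma dnonneg (x y : X) : 0 ≤ δ x y := hδ.2.1 x y
lemma drefl (x : X) : δ x x = 0 := (hδ.2.2.1 x x).mpr rfl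
lemma dsymm (x y : X) : δ x y = δ y x := hδ.2.2.2.1 x y
lemma dtri (x y z : X) : δ x z ≤ Kδ * (δ x y + δ y z) := hδ.2.2.2.2 x y z

lemma self_mem_ball {x : X} {r : ℝ} (hr : 0 < r) : x ∈ ball δ x r := by
  simpa [mem_ball, drefl hδ] using hr

/-- if `δ x z < ε` then `ball δ z s ⊆ ball δ x (Kδ*(ε+s))`. -/
lemma ball_subset_ball_of_close {x z : X} {ε s : ℝ} (h : δ x z < ε) :
    ball δ z s ⊆ ball δ x (Kδ * (ε + s)) := by
  intro w hw
  exact lt_of_le_of_lt (dtri hδ x z w)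
    (mul_lt_mul_of_pos_left (add_lt_add h hw) (Kpos hδ))

end basics

section distE

variable {δ : X → X → ℝ} {Kδ : ℝ} (hδ : QD δ Kδ) {E : Set X} (hE : E.Nonempty)

include hδ hE

lemma distE_lt_iff {x : X} {t : ℝ} : distE δ E x < t ↔ ∃ e ∈ E, δ x e < t := by
  constructor
  · intro h
    obtain ⟨y, ⟨e, he, rfl⟩, hy⟩ :=
      (csInf_lt_iff ⟨0, by rintro y ⟨e, he, rfl⟩; exact dnonneg hδ x e⟩ (hE.image _)).mp h
    exact ⟨e, he, hy⟩
  · rintro ⟨e, he, hlt⟩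
    exact lt_of_le_of_lt (csInf_le ⟨0, by rintro y ⟨e', he', rfl⟩; exact dnonneg hδ x e'⟩
      ⟨e, he, rfl⟩) hlt

omit hδ in
include hE in
lemma le_distE {x : X} {c : ℝ} (h : ∀ e ∈ E, c ≤ δ x e) : c ≤ distE δ E x :=
  le_csInf (hE.image _) (by rintro y ⟨e, he, rfl⟩; exact h e he)

end distE

section hole

variable {δ : X → X → ℝ} {Kδ : ℝ} {E : Set X}

lemma le_hole {x y : X} {r s : ℝ} (hs : 0 < s) (hs2 : s ≤ 2 * Kδ * r)
    (hsub : ball δ y s ⊆ ball δ x r \ E) : s ≤ hole δ Kδ E x r := by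
  apply le_csSup
  · exact ⟨2 * Kδ * r, by rintro u ⟨h1, h2, h3⟩; exact h2⟩
  · exact ⟨hs, hs2, y, hsub⟩

lemma hole_doubling_pow {C : ℝ} (hC0 : 0 ≤ C) (hC : HoleDoubling δ Kδ E C) (x : X) :
    ∀ (m : ℕ) (r : ℝ), 0 < r → hole δ Kδ E x (2 ^ m * r) ≤ C ^ m * hole δ Kδ E x r := by
  intro m
  induction m with
  | zero => intro r _; simp
  | succ m ih =>
    intro r hr
    have h1 : (2:ℝ) ^ (m+1) * r = 2 ^ m * (2 * r) := by ring
    calc hole δ Kδ E x (2 ^ (m+1) * r) = hole δ Kδ E x (2 ^ m * (2 * r)) := by rw [h1]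
      _ ≤ C ^ m * hole δ Kδ E x (2 * r) := ih _ (by linarith)
      _ ≤ C ^ m * (C * hole δ Kδ E x r) :=
          mul_le_mul_of_nonneg_left (hC x r hr) (pow_nonneg hC0 m)
      _ = C ^ (m+1) * hole δ Kδ E x r := by ring

end hole

section doubling

variable [MeasurableSpace X] {μ : Measure X} {d δ : X → X → ℝ} {K Kδ A : ℝ}

lemma mu_dball_pow (hA : DoublingBalls μ d A) :
    ∀ (m : ℕ) (x : X) (s : ℝ), 0 < s →
      μ (ball d x (2 ^ m * s)) ≤ (ENNReal.ofReal A) ^ m * μ (ball d x s) := by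
  intro m
  induction m with
  | zero => intro x s _; simp
  | succ m ih =>
    intro x s hs
    have h1 : (2:ℝ) ^ (m+1) * s = 2 * (2 ^ m * s) := by ring
    calc μ (ball d x (2 ^ (m+1) * s)) = μ (ball d x (2 * (2 ^ m * s))) := by rw [h1]
      _ ≤ ENNReal.ofReal A * μ (ball d x (2 ^ m * s)) :=
          (hA x (2 ^ m * s) (by positivity)).2.2
      _ ≤ ENNReal.ofReal A * ((ENNReal.ofReal A) ^ m * μ (ball d x s)) :=
          mul_le_mul_right (ih x s hs) _
      _ = (ENNReal.ofReal A) ^ (m+1) * μ (ball d x s) := by ring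

lemma mu_deltaball_le (hd : QD d K) (hA : DoublingBalls μ d A)
    (hequiv : ∀ x y, δ x y ≤ d x y ∧ d x y ≤ 3 * K ^ 2 * δ x y)
    {x : X} {s S : ℝ} (m : ℕ) (hs : 0 < s) (hle : 3 * K ^ 2 * S ≤ 2 ^ m * s) :
    μ (ball δ x S) ≤ (ENNReal.ofReal A) ^ m * μ (ball δ x s) := by
  have hK : (0:ℝ) < 3 * K ^ 2 := by
    have := Kpos hd; positivity
  have h1 : ball δ x S ⊆ ball d x (2 ^ m * s) := by
    intro y hy
    calc d x y ≤ 3 * K ^ 2 * δ x y := (hequiv x y).2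
      _ < 3 * K ^ 2 * S := mul_lt_mul_of_pos_left hy hK
      _ ≤ 2 ^ m * s := hle
  have h2 : ball d x s ⊆ ball δ x s := fun y hy => lt_of_le_of_lt (hequiv x y).1 hy
  calc μ (ball δ x S) ≤ μ (ball d x (2 ^ m * s)) := measure_mono h1
    _ ≤ (ENNReal.ofReal A) ^ m * μ (ball d x s) := mu_dball_pow hA m x s hs
    _ ≤ (ENNReal.ofReal A) ^ m * μ (ball δ x s) := mul_le_mul_right (measure_mono h2) _

lemma mu_deltaball_pos (hd : QD d K) (hA : DoublingBalls μ d A)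
    (hequiv : ∀ x y, δ x y ≤ d x y ∧ d x y ≤ 3 * K ^ 2 * δ x y)
    {x : X} {s : ℝ} (hs : 0 < s) : 0 < μ (ball δ x s) :=
  lt_of_lt_of_le (hA x s hs).1
    (measure_mono fun y hy => lt_of_le_of_lt (hequiv x y).1 hy)

lemma mu_deltaball_fin (hd : QD d K) (hA : DoublingBalls μ d A)
    (hequiv : ∀ x y, δ x y ≤ d x y ∧ d x y ≤ 3 * K ^ 2 * δ x y)
    {x : X} {s : ℝ} (hs : 0 < s) : μ (ball δ x s) < ⊤ := by
  have hK : (0:ℝ) < 3 * K ^ 2 := by have := Kpos hd; positivity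
  have h1 : ball δ x s ⊆ ball d x (3 * K ^ 2 * s) := by
    intro y hy
    calc d x y ≤ 3 * K ^ 2 * δ x y := (hequiv x y).2
      _ < 3 * K ^ 2 * s := mul_lt_mul_of_pos_left hy hK
  exact lt_of_le_of_lt (measure_mono h1) (hA x _ (by positivity)).2.1

end doubling

section perpoint

variable [TopologicalSpace X] [MeasurableSpace X] [BorelSpace X]
  {μ : Measure X} {d δ : X → X → ℝ} {K Kδ A β σ γ C : ℝ} {E : Set X}


/-- The per-point construction. -/
lemma perpoint
    (hd : QD d K) (hδ : QD δ Kδ) (hA : DoublingBalls μ d A)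
    (hopenδ : ∀ x r, IsOpen (ball δ x r))
    (hequiv : ∀ x y, δ x y ≤ d x y ∧ d x y ≤ 3 * K ^ 2 * δ x y)
    (hβ : β ∈ Set.Ioo (0:ℝ) 1)
    (hint : ∀ x r t y, 0 < r → 0 < t → t ≤ 2 * Kδ * r → y ∈ ball δ x r →
      ∃ z, ball δ z (β * t) ⊆ ball δ y t ∩ ball δ x r)
    (hE : E.Nonempty)
    (hσ : σ ∈ Set.Ioo (0:ℝ) 1) (hγ : γ ∈ Set.Ioo (0:ℝ) 1)
    (hwp : WeaklyPorousWith μ δ Kδ E σ γ)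
    (hC : 0 < C) (hCd : HoleDoubling δ Kδ E C)
    (x₀ : X) (r₀ : ℝ) (hr₀ : 0 < r₀)
    (cs : X) (ρs : ℝ) (hρs : 0 < ρs) (hρs2 : ρs ≤ 2 * Kδ * r₀)
    (hcs : ball δ cs ρs ⊆ ball δ x₀ r₀ \ E)
    (t T T' : ℝ) (ht : 0 < t) (htle : t ≤ 2 * Kδ * r₀)
    (hT : T = 2 * Kδ * t) (hT'le : T' ≤ t)
    (m₁ m₂ m₃ : ℕ)
    (hm₁ : 3 * K ^ 2 * (Kδ * (t + 2 * Kδ * t)) ≤ 2 ^ m₁ * (β * t))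
    (hm₂ : 6 * K ^ 2 * Kδ ≤ 2 ^ m₂)
    (hm₃ : 2 * Kδ * r₀ ≤ 2 ^ m₃ * (β * t))
    (hT'h : T' ≤ γ * (ρs / C ^ m₃) / (2 * Kδ))
    (x : X) (hx : x ∈ ball δ x₀ r₀) (hxd : distE δ E x < T') :
    ∃ U : Set X, MeasurableSet U ∧ U ⊆ ball δ x₀ r₀ ∧ U ⊆ ball δ x t ∧
      (∀ u ∈ U, distE δ E u < T) ∧ (∀ u ∈ U, T' ≤ distE δ E u) ∧
      ENNReal.ofReal σ * μ (ball δ x (2 * Kδ * t)) ≤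
        (ENNReal.ofReal A) ^ (m₁ + m₂) * μ U := by
  have hKδ1 : 1 ≤ Kδ := hδ.1
  have hKδ : 0 < Kδ := Kpos hδ
  have hβ0 : 0 < β := hβ.1
  have hβt : 0 < β * t := by positivity
  obtain ⟨z, hz⟩ := hint x₀ r₀ t x hr₀ ht htle hx
  have hzmem := hz (self_mem_ball hδ hβt)
  have hxz : δ x z < t := hzmem.1
  have hzB : z ∈ ball δ x₀ r₀ := hzmem.2
  -- lower bound for the hole of `B_δ(z, βt)`
  have hzx₀ : δ z x₀ < r₀ := by rw [dsymm hδ z x₀]; exact hzB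
  have hBz : ball δ x₀ r₀ ⊆ ball δ z (2 ^ m₃ * (β * t)) := by
    refine subset_trans (ball_subset_ball_of_close hδ hzx₀) (ball_mono ?_)
    calc Kδ * (r₀ + r₀) = 2 * Kδ * r₀ := by ring
      _ ≤ 2 ^ m₃ * (β * t) := hm₃
  have hole1 : ρs ≤ hole δ Kδ E z (2 ^ m₃ * (β * t)) := by
    refine le_hole hρs ?_ (fun w hw => ⟨hBz (hcs hw).1, (hcs hw).2⟩)
    have h1 : ρs ≤ 2 ^ m₃ * (β * t) := le_trans hρs2 hm₃
    nlinarith [pow_pos (by norm_num : (0:ℝ) < 2) m₃]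
  have hole2 : hole δ Kδ E z (2 ^ m₃ * (β * t)) ≤ C ^ m₃ * hole δ Kδ E z (β * t) :=
    hole_doubling_pow hC.le hCd z m₃ (β * t) hβt
  have hole3 : ρs / C ^ m₃ ≤ hole δ Kδ E z (β * t) := by
    rw [div_le_iff₀ (pow_pos hC m₃)]
    calc ρs ≤ C ^ m₃ * hole δ Kδ E z (β * t) := le_trans hole1 hole2
      _ = hole δ Kδ E z (β * t) * C ^ m₃ := by ring
  -- weak porosity applied to `B_δ(z, βt)`
  obtain ⟨n, c, ρ, hdisj, hsub, hlow, hhigh, hmeas⟩ := hwp z (β * t) hβt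
  have hρj : ∀ j, γ * (ρs / C ^ m₃) ≤ ρ j := fun j =>
    le_trans (mul_le_mul_of_nonneg_left hole3 hγ.1.le) (hlow j)
  have hρjpos : ∀ j, 0 < ρ j := fun j => by
    have h1 : 0 < ρs / C ^ m₃ := by positivity
    have := hγ.1
    exact lt_of_lt_of_le (by positivity) (hρj j)
  have hshrunk : ∀ j, ball δ (c j) (ρ j / (2 * Kδ)) ⊆ ball δ (c j) (ρ j) :=
    fun j => ball_mono (div_le_self (hρjpos j).le (by linarith))
  have hUsubz : ∀ j, ball δ (c j) (ρ j / (2 * Kδ)) ⊆ ball δ z (β * t) :=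
    fun j => subset_trans (hshrunk j) (subset_trans (hsub j) diff_subset)
  have hUsubB : ∀ j, ball δ (c j) (ρ j / (2 * Kδ)) ⊆ ball δ x₀ r₀ :=
    fun j => subset_trans (hUsubz j) (subset_trans hz (inter_subset_right))
  have hUsubx : ∀ j, ball δ (c j) (ρ j / (2 * Kδ)) ⊆ ball δ x t :=
    fun j => subset_trans (hUsubz j) (subset_trans hz (inter_subset_left))
  refine ⟨⋃ j, ball δ (c j) (ρ j / (2 * Kδ)), ?_, ?_, ?_, ?_, ?_, ?_⟩
  · exact MeasurableSet.iUnion fun j => (hopenδ _ _).measurableSet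
  · exact iUnion_subset hUsubB
  · exact iUnion_subset hUsubx
  -- distE < T on U
  · intro u hu
    obtain ⟨e, he, hxe⟩ := (distE_lt_iff hδ hE).mp hxd
    obtain ⟨j, hj⟩ := mem_iUnion.mp hu
    have hux : δ u x < t := by rw [dsymm hδ u x]; exact hUsubx j hj
    refine (distE_lt_iff hδ hE).mpr ⟨e, he, ?_⟩
    have h1 := dtri hδ u x e
    have h2 : Kδ * (δ u x + δ x e) < Kδ * (t + t) :=
      mul_lt_mul_of_pos_left (add_lt_add hux (lt_of_lt_of_le hxe hT'le)) hKδ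
    rw [hT]; linarith
  -- T' ≤ distE on U
  · intro u hu
    obtain ⟨j, hj⟩ := mem_iUnion.mp hu
    refine le_distE hE fun e he => ?_
    by_contra hlt
    push_neg at hlt
    have h1 : δ (c j) e < ρ j := by
      have h2 := dtri hδ (c j) u e
      have h3 : δ (c j) u < ρ j / (2 * Kδ) := hj
      have h4 : δ u e < ρ j / (2 * Kδ) :=
        lt_of_lt_of_le hlt (le_trans hT'h (by
          apply div_le_div_of_nonneg_right ?_ (by linarith)
          · exact hρj j
          ))
      have h5 : Kδ * (ρ j / (2 * Kδ) + ρ j / (2 * Kδ)) = ρ j := by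
        field_simp; ring
      nlinarith
    exact ((hsub j) h1).2 he
  -- the measure estimate
  · have hxball : ball δ x (2 * Kδ * t) ⊆ ball δ z (Kδ * (t + 2 * Kδ * t)) := by
      have hzx : δ z x < t := by rw [dsymm hδ z x]; exact hxz
      exact ball_subset_ball_of_close hδ hzx
    have h1 : μ (ball δ x (2 * Kδ * t)) ≤
        (ENNReal.ofReal A) ^ m₁ * μ (ball δ z (β * t)) :=
      le_trans (measure_mono hxball) (mu_deltaball_le hd hA hequiv m₁ hβt hm₁)
    have h2 : ∀ j, μ (ball δ (c j) (ρ j)) ≤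
        (ENNReal.ofReal A) ^ m₂ * μ (ball δ (c j) (ρ j / (2 * Kδ))) := by
      intro j
      refine mu_deltaball_le hd hA hequiv m₂ (by have := hρjpos j; positivity) ?_
      have heq : 3 * K ^ 2 * ρ j = (6 * K ^ 2 * Kδ) * (ρ j / (2 * Kδ)) := by
        field_simp; ring
      rw [heq]
      exact mul_le_mul_of_nonneg_right hm₂ (by have := hρjpos j; positivity)
    have h3 : ∑ j, μ (ball δ (c j) (ρ j / (2 * Kδ))) ≤
        μ (⋃ j, ball δ (c j) (ρ j / (2 * Kδ))) := by
      rw [← tsum_fintype (L := SummationFilter.unconditional _)]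
      refine tsum_meas_le_meas_iUnion_of_disjoint μ
        (fun j => (hopenδ _ _).measurableSet) ?_
      intro i j hij
      exact (hdisj i j hij).mono (hshrunk i) (hshrunk j)
    calc ENNReal.ofReal σ * μ (ball δ x (2 * Kδ * t))
        ≤ ENNReal.ofReal σ * ((ENNReal.ofReal A) ^ m₁ * μ (ball δ z (β * t))) :=
          mul_le_mul_right h1 _
      _ = (ENNReal.ofReal A) ^ m₁ * (ENNReal.ofReal σ * μ (ball δ z (β * t))) := by ring
      _ ≤ (ENNReal.ofReal A) ^ m₁ * ∑ j, μ (ball δ (c j) (ρ j)) :=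
          mul_le_mul_right hmeas _
      _ ≤ (ENNReal.ofReal A) ^ m₁ *
            ∑ j, (ENNReal.ofReal A) ^ m₂ * μ (ball δ (c j) (ρ j / (2 * Kδ))) :=
          mul_le_mul_right (Finset.sum_le_sum fun j _ => h2 j) _
      _ = (ENNReal.ofReal A) ^ (m₁ + m₂) *
            ∑ j, μ (ball δ (c j) (ρ j / (2 * Kδ))) := by
          rw [← Finset.mul_sum, pow_add]; ring
      _ ≤ (ENNReal.ofReal A) ^ (m₁ + m₂) * μ (⋃ j, ball δ (c j) (ρ j / (2 * Kδ))) :=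
          mul_le_mul_right h3 _

end perpoint

section key

variable [TopologicalSpace X] [MeasurableSpace X] [BorelSpace X]
  {μ : Measure X} {d δ : X → X → ℝ} {K Kδ A β σ γ C : ℝ} {E : Set X}

lemma key
    (hd : QD d K) (hδ : QD δ Kδ) (hA : DoublingBalls μ d A)
    (hopenδ : ∀ x r, IsOpen (ball δ x r))
    (hequiv : ∀ x y, δ x y ≤ d x y ∧ d x y ≤ 3 * K ^ 2 * δ x y)
    (hβ : β ∈ Set.Ioo (0:ℝ) 1)
    (hint : ∀ x r t y, 0 < r → 0 < t → t ≤ 2 * Kδ * r → y ∈ ball δ x r →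
      ∃ z, ball δ z (β * t) ⊆ ball δ y t ∩ ball δ x r)
    (hE : E.Nonempty)
    (hσ : σ ∈ Set.Ioo (0:ℝ) 1) (hγ : γ ∈ Set.Ioo (0:ℝ) 1)
    (hwp : WeaklyPorousWith μ δ Kδ E σ γ)
    (hC : 0 < C) (hCd : HoleDoubling δ Kδ E C)
    (x₀ : X) (r₀ : ℝ) (hr₀ : 0 < r₀) :
    μ (closure E ∩ ball δ x₀ r₀) = 0 := by
  have hKδ1 : 1 ≤ Kδ := hδ.1
  have hKδ : 0 < Kδ := Kpos hδ
  have hK1 : 1 ≤ K := hd.1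
  have hK : 0 < K := Kpos hd
  have hβ0 : 0 < β := hβ.1
  have hσ0 : 0 < σ := hσ.1
  have hγ0 : 0 < γ := hγ.1
  -- a hole ball inside B₀ := ball δ x₀ r₀
  obtain ⟨n₀, c₀, ρ₀, hdisj₀, hsub₀, hlow₀, hhigh₀, hmeas₀⟩ := hwp x₀ r₀ hr₀
  have hBpos : 0 < μ (ball δ x₀ r₀) := mu_deltaball_pos hd hA hequiv hr₀
  have hsum : ∑ i, μ (ball δ (c₀ i) (ρ₀ i)) ≠ 0 := by
    intro h0
    rw [h0] at hmeas₀
    exact (mul_ne_zero (ENNReal.ofReal_pos.mpr hσ0).ne' hBpos.ne')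
      (le_antisymm hmeas₀ zero_le)
  obtain ⟨i, -, hi⟩ := Finset.exists_ne_zero_of_sum_ne_zero hsum
  obtain ⟨y, hy⟩ := nonempty_of_measure_ne_zero hi
  have hρs : 0 < ρ₀ i := lt_of_le_of_lt (dnonneg hδ (c₀ i) y) hy
  set cs := c₀ i with hcsdef
  set ρs := ρ₀ i with hρsdef
  have hcs : ball δ cs ρs ⊆ ball δ x₀ r₀ \ E := hsub₀ i
  have hρs2 : ρs ≤ 2 * Kδ * r₀ := hhigh₀ i
  -- fixed constants
  obtain ⟨m₁, hm₁⟩ := pow_unbounded_of_one_lt ((3*K^2*(Kδ*(1+2*Kδ)))/β) (one_lt_two : (1:ℝ) < 2)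
  obtain ⟨m₂, hm₂⟩ := pow_unbounded_of_one_lt (6*K^2*Kδ) (one_lt_two : (1:ℝ) < 2)
  set aa : ℝ≥0∞ := (ENNReal.ofReal A) ^ (m₁ + m₂) with haadef
  set ss : ℝ≥0∞ := ENNReal.ofReal σ with hssdef
  have hA0 : ENNReal.ofReal A ≠ 0 := by
    intro h0
    have h1 := (hA x₀ r₀ hr₀).2.2
    rw [h0, zero_mul] at h1
    exact absurd (le_antisymm (le_trans (measure_mono (ball_mono (by linarith))) h1)
      zero_le) (hA x₀ r₀ hr₀).1.ne'
  have haa0 : aa ≠ 0 := pow_ne_zero _ hA0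
  have haat : aa ≠ ⊤ := by
    apply ENNReal.pow_ne_top ENNReal.ofReal_ne_top
  have hss0 : ss ≠ 0 := (ENNReal.ofReal_pos.mpr hσ0).ne'
  have has0 : aa + ss ≠ 0 := fun h => haa0 (by simpa using (add_eq_zero.mp h).1)
  have hast : aa + ss ≠ ⊤ :=
    ENNReal.add_ne_top.mpr ⟨haat, ENNReal.ofReal_ne_top⟩
  -- the thin sets
  set S : ℝ → Set X := fun τ => ball δ x₀ r₀ ∩ {p | distE δ E p < τ} with hSdef
  have hSopen : ∀ τ, IsOpen (S τ) := by
    intro τ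
    have h1 : {p | distE δ E p < τ} = ⋃ e ∈ E, ball δ e τ := by
      ext p
      simp only [Set.mem_setOf_eq, Set.mem_iUnion]
      constructor
      · intro h
        obtain ⟨e, he, hlt⟩ := (distE_lt_iff hδ hE).mp h
        exact ⟨e, he, by rw [mem_ball, dsymm hδ e p]; exact hlt⟩
      · rintro ⟨e, he, hlt⟩
        exact (distE_lt_iff hδ hE).mpr ⟨e, he, by rw [dsymm hδ p e]; exact hlt⟩
    exact (hopenδ x₀ r₀).inter (h1 ▸ isOpen_biUnion fun e _ => hopenδ e τ)
  have hSmeas : ∀ τ, MeasurableSet (S τ) := fun τ => (hSopen τ).measurableSet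
  have hSmono : ∀ {τ τ' : ℝ}, τ ≤ τ' → S τ ⊆ S τ' := by
    intro τ τ' h p hp
    exact ⟨hp.1, lt_of_lt_of_le hp.2 h⟩
  have hSfin : μ (S r₀) ≠ ⊤ :=
    (lt_of_le_of_lt (measure_mono inter_subset_left)
      (mu_deltaball_fin hd hA hequiv hr₀)).ne
  -- the one-step inequality
  have step : ∀ T, 0 < T → T ≤ r₀ →
      ∃ T', 0 < T' ∧ T' ≤ T ∧ (aa + ss) * μ (S T') ≤ aa * μ (S T) := by
    intro T hT hTr
    set t := T / (2*Kδ) with htdef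
    have ht : 0 < t := by positivity
    have hTt : T = 2*Kδ*t := by rw [htdef]; field_simp
    have htT : t ≤ T := by
      rw [htdef]
      exact div_le_self hT.le (by linarith)
    have htle : t ≤ 2*Kδ*r₀ := le_trans htT (by nlinarith)
    have hβt : 0 < β * t := by positivity
    obtain ⟨m₃, hm₃'⟩ := pow_unbounded_of_one_lt ((2*Kδ*r₀)/(β*t)) (one_lt_two : (1:ℝ) < 2)
    have hm₃ : 2*Kδ*r₀ ≤ 2^m₃*(β*t) := by
      rw [div_lt_iff₀ hβt] at hm₃'
      linarith
    have hm₁' : 3*K^2*(Kδ*(t + 2*Kδ*t)) ≤ 2^m₁*(β*t) := by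
      have h1 := mul_le_mul_of_nonneg_right hm₁.le hβt.le
      have heq : (3*K^2*(Kδ*(1+2*Kδ))/β)*(β*t) = 3*K^2*(Kδ*(t+2*Kδ*t)) := by
        field_simp
      linarith [heq ▸ h1]
    set T' := min (γ * (ρs / C^m₃) / (2*Kδ)) (t/2) with hT'def
    have hT'0 : 0 < T' := lt_min (by positivity) (by positivity)
    have hT'le : T' ≤ t := le_trans (min_le_right _ _) (by linarith)
    have hT'T : T' ≤ T := le_trans hT'le htT
    have hT'h : T' ≤ γ * (ρs / C^m₃) / (2*Kδ) := min_le_left _ _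
    -- choose the per-point sets
    have pp' : ∀ x, ∃ U : Set X, x ∈ S T' →
        (MeasurableSet U ∧ U ⊆ ball δ x₀ r₀ ∧ U ⊆ ball δ x t ∧
          (∀ u ∈ U, distE δ E u < T) ∧ (∀ u ∈ U, T' ≤ distE δ E u) ∧
          ENNReal.ofReal σ * μ (ball δ x (2 * Kδ * t)) ≤
            (ENNReal.ofReal A) ^ (m₁ + m₂) * μ U) := by
      intro x
      by_cases hx : x ∈ S T'
      · obtain ⟨U, hU⟩ := perpoint hd hδ hA hopenδ hequiv hβ hint hE hσ hγ hwp hC hCd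
          x₀ r₀ hr₀ cs ρs hρs hρs2 hcs t T T' ht htle hTt hT'le m₁ m₂ m₃
          hm₁' hm₂.le hm₃ hT'h x hx.1 hx.2
        exact ⟨U, fun _ => hU⟩
      · exact ⟨∅, fun h => absurd h hx⟩
    choose U hU using pp'
    -- Zorn: a maximal `t`-disjoint subfamily of centers in `S T'`
    set 𝒟 : Set (Set X) :=
      {D : Set X | D ⊆ S T' ∧ D.PairwiseDisjoint (fun p => ball δ p t)} with h𝒟def
    obtain ⟨D, hDmax⟩ := zorn_subset 𝒟 (by
      intro c hc hchain
      refine ⟨⋃₀ c, ⟨sUnion_subset fun s hs => (hc hs).1, ?_⟩,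
        fun s hs => subset_sUnion_of_mem hs⟩
      intro a ha b hb hab
      obtain ⟨s, hs, has⟩ := ha
      obtain ⟨s', hs', hbs'⟩ := hb
      rcases hchain.total hs hs' with h | h
      · exact (hc hs').2 (h has) hbs' hab
      · exact (hc hs).2 has (h hbs') hab)
    have hD𝒟 : D ∈ 𝒟 := hDmax.prop
    have hDP : D ⊆ S T' := hD𝒟.1
    have hDdisj : D.PairwiseDisjoint (fun p => ball δ p t) := hD𝒟.2
    -- covering property
    have hcover : ∀ p ∈ S T', ∃ x ∈ D, δ x p < 2*Kδ*t := by
      intro p hp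
      by_cases hpD : p ∈ D
      · exact ⟨p, hpD, by rw [drefl hδ]; positivity⟩
      · by_contra hno
        push_neg at hno
        have hdisjall : ∀ x ∈ D, Disjoint (ball δ p t) (ball δ x t) := by
          intro x hx
          rw [Set.disjoint_left]
          intro w hwp' hwx
          have h1 := dtri hδ x w p
          have h2 : δ w p < t := by rw [dsymm hδ w p]; exact hwp'
          have h3 := hno x hx
          nlinarith [hwx.out]
        have hins : insert p D ∈ 𝒟 := by
          refine ⟨insert_subset hp hDP, ?_⟩
          rw [Set.pairwiseDisjoint_insert]
          exact ⟨hDdisj, fun x hx _ => hdisjall x hx⟩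
        exact hpD (hDmax.2 hins (subset_insert p D) (mem_insert p D))
    -- countability of D
    have hDc : D.Countable := by
      set Big := ball δ x₀ (Kδ * (r₀ + t)) with hBigdef
      have hBigfin : μ Big < ⊤ := mu_deltaball_fin hd hA hequiv (by positivity)
      haveI hfm : IsFiniteMeasure (μ.restrict Big) :=
        ⟨by rw [Measure.restrict_apply_univ]; exact hBigfin⟩
      have hsubBig : ∀ x ∈ D, ball δ x t ⊆ Big := by
        intro x hx
        exact ball_subset_ball_of_close hδ (hDP hx).1
      have hcnt := Measure.countable_meas_pos_of_disjoint_iUnion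
        (μ := μ.restrict Big) (As := fun (x : D) => ball δ (x : X) t)
        (fun x => (hopenδ _ _).measurableSet)
        (fun i j hij => hDdisj i.2 j.2 (fun h => hij (Subtype.ext h)))
      have hall : ∀ x : D, 0 < (μ.restrict Big) (ball δ (x : X) t) := by
        intro x
        rw [Measure.restrict_apply (hopenδ _ _).measurableSet,
          inter_eq_self_of_subset_left (hsubBig x x.2)]
        exact mu_deltaball_pos hd hA hequiv ht
      rw [← Set.countable_coe_iff]
      have : {i : D | 0 < (μ.restrict Big) (ball δ (i : X) t)} = Set.univ :=
        eq_univ_of_forall fun x => hall x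
      rw [this] at hcnt
      exact Set.countable_univ_iff.mp hcnt
    -- the union of the hole sets
    set W := ⋃ x ∈ D, U x with hWdef
    have hWmeas : MeasurableSet W :=
      MeasurableSet.biUnion hDc fun x hx => (hU x (hDP hx)).1
    have hUdisj : D.PairwiseDisjoint U := by
      intro a ha b hb hab
      exact (hDdisj ha hb hab).mono (hU a (hDP ha)).2.2.1 (hU b (hDP hb)).2.2.1
    have hWsub : W ⊆ S T := by
      intro u hu
      obtain ⟨x, hx, hux⟩ := mem_iUnion₂.mp hu
      exact ⟨(hU x (hDP hx)).2.1 hux, (hU x (hDP hx)).2.2.2.1 u hux⟩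
    have hPW : Disjoint (S T') W := by
      rw [Set.disjoint_left]
      intro p hpP hpW
      obtain ⟨x, hx, hux⟩ := mem_iUnion₂.mp hpW
      exact absurd hpP.2 (not_lt.mpr ((hU x (hDP hx)).2.2.2.2.1 p hux))
    -- measure estimates
    have hμP : μ (S T') ≤ ∑' (x : D), μ (ball δ (x : X) (2*Kδ*t)) := by
      refine le_trans (measure_mono ?_) (measure_biUnion_le μ hDc (fun x => ball δ x (2*Kδ*t)))
      intro p hp
      obtain ⟨x, hx, hlt⟩ := hcover p hp
      exact mem_biUnion hx hlt
    have main1 : ss * μ (S T') ≤ aa * μ W := by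
      calc ss * μ (S T') ≤ ss * ∑' (x : D), μ (ball δ (x : X) (2*Kδ*t)) :=
            mul_le_mul_right hμP _
        _ = ∑' (x : D), ss * μ (ball δ (x : X) (2*Kδ*t)) := ENNReal.tsum_mul_left.symm
        _ ≤ ∑' (x : D), aa * μ (U x) :=
            ENNReal.tsum_le_tsum fun x => (hU x (hDP x.2)).2.2.2.2.2
        _ = aa * ∑' (x : D), μ (U x) := ENNReal.tsum_mul_left
        _ = aa * μ W := by
            rw [measure_biUnion hDc hUdisj fun x hx => (hU x (hDP hx)).1]
    have hunion : μ (S T') + μ W ≤ μ (S T) := by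
      rw [← measure_union hPW hWmeas]
      exact measure_mono (union_subset (hSmono hT'T) hWsub)
    refine ⟨T', hT'0, hT'T, ?_⟩
    calc (aa + ss) * μ (S T') = aa * μ (S T') + ss * μ (S T') := by rw [add_mul]
      _ ≤ aa * μ (S T') + aa * μ W := add_le_add le_rfl main1
      _ = aa * (μ (S T') + μ W) := by rw [mul_add]
      _ ≤ aa * μ (S T) := mul_le_mul_right hunion _
  -- iterate
  have step' : ∀ T, ∃ T', (0 < T ∧ T ≤ r₀) →
      (0 < T' ∧ T' ≤ T ∧ (aa + ss) * μ (S T') ≤ aa * μ (S T)) := by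
    intro T
    by_cases h : 0 < T ∧ T ≤ r₀
    · obtain ⟨T', h1, h2, h3⟩ := step T h.1 h.2
      exact ⟨T', fun _ => ⟨h1, h2, h3⟩⟩
    · exact ⟨1, fun hh => absurd hh h⟩
  choose f hf using step'
  set u : ℕ → ℝ := fun k => Nat.rec (motive := fun _ => ℝ) r₀ (fun _ x => f x) k with hudef
  have hu0 : u 0 = r₀ := rfl
  have husucc : ∀ k, u (k+1) = f (u k) := fun k => rfl
  have hinv : ∀ k, 0 < u k ∧ u k ≤ r₀ := by
    intro k
    induction k with
    | zero => exact ⟨hr₀, le_rfl⟩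
    | succ k ih =>
      obtain ⟨h1, h2, _⟩ := hf (u k) ih
      exact ⟨h1, le_trans h2 ih.2⟩
  have hbound : ∀ k, (aa + ss)^k * μ (S (u k)) ≤ aa^k * μ (S r₀) := by
    intro k
    induction k with
    | zero => simp [hu0]
    | succ k ih =>
      obtain ⟨-, -, h3⟩ := hf (u k) (hinv k)
      calc (aa + ss)^(k+1) * μ (S (u (k+1)))
          = (aa + ss)^k * ((aa + ss) * μ (S (f (u k)))) := by
            rw [husucc k]; ring
        _ ≤ (aa + ss)^k * (aa * μ (S (u k))) := mul_le_mul_right h3 _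
        _ = aa * ((aa + ss)^k * μ (S (u k))) := by ring
        _ ≤ aa * (aa^k * μ (S r₀)) := mul_le_mul_right ih _
        _ = aa^(k+1) * μ (S r₀) := by ring
  have hsubk : ∀ k, closure E ∩ ball δ x₀ r₀ ⊆ S (u k) := by
    intro k x hx
    refine ⟨hx.2, ?_⟩
    have hop : IsOpen (ball δ x (u k)) := hopenδ _ _
    have hxm : x ∈ ball δ x (u k) := self_mem_ball hδ (hinv k).1
    obtain ⟨e, heB, heE⟩ := mem_closure_iff.mp hx.1 _ hop hxm
    exact (distE_lt_iff hδ hE).mpr ⟨e, heE, heB⟩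
  -- pass to the limit
  set q : ℝ≥0∞ := aa / (aa + ss) with hqdef
  have hq1 : q < 1 := by
    rw [hqdef, ENNReal.div_lt_iff (Or.inl has0) (Or.inl hast), one_mul]
    exact ENNReal.lt_add_right haat hss0
  have hk : ∀ k, μ (closure E ∩ ball δ x₀ r₀) ≤ q^k * μ (S r₀) := by
    intro k
    have h1 : μ (S (u k)) ≤ (aa^k * μ (S r₀)) / (aa + ss)^k := by
      rw [ENNReal.le_div_iff_mul_le (Or.inl (pow_ne_zero _ has0))
        (Or.inl (ENNReal.pow_ne_top hast))]
      rw [mul_comm]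
      exact hbound k
    have h2 : (aa^k * μ (S r₀)) / (aa + ss)^k = q^k * μ (S r₀) := by
      have hq : q^k = aa^k * ((aa + ss)^k)⁻¹ := by
        rw [hqdef, div_eq_mul_inv, mul_pow, ENNReal.inv_pow]
      rw [hq, div_eq_mul_inv]; ring
    exact le_trans (measure_mono (hsubk k)) (le_of_le_of_eq h1 h2)
  have htend : Filter.Tendsto (fun k => q^k * μ (S r₀)) Filter.atTop (nhds 0) := by
    have h0 := ENNReal.tendsto_pow_atTop_nhds_zero_of_lt_one hq1
    have h1 := ENNReal.Tendsto.mul_const h0 (Or.inr hSfin)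
    simpa using h1
  exact le_antisymm (ge_of_tendsto' htend hk) zero_le

end key

/-- If `E` is weakly porous w.r.t. the Macías–Segovia quasi-distance `δ` (equivalent
to `d` with `δ ≤ d ≤ 3K_d²δ`, open balls and the uniform interior-ball property)
and `ρ_{δ,E}` is doubling, then `μ(closure E) = 0`. -/
theorem statement14 {X : Type*} [TopologicalSpace X] [MeasurableSpace X] [BorelSpace X]
    (μ : Measure X) (d δ : X → X → ℝ) (K Kδ A β : ℝ)
    (hd : QD d K) (hδ : QD δ Kδ) (hb : BallsBasis d) (hA : DoublingBalls μ d A)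
    (hopenδ : ∀ x r, IsOpen (ball δ x r))
    (hequiv : ∀ x y, δ x y ≤ d x y ∧ d x y ≤ 3 * K ^ 2 * δ x y)
    (hβ : β ∈ Set.Ioo (0:ℝ) 1)
    (hint : ∀ x r t y, 0 < r → 0 < t → t ≤ 2 * Kδ * r → y ∈ ball δ x r →
      ∃ z, ball δ z (β * t) ⊆ ball δ y t ∩ ball δ x r)
    (E : Set X) (hE : E.Nonempty)
    (hwp : WeaklyPorous μ δ Kδ E) (hdbl : ∃ C, 0 < C ∧ HoleDoubling δ Kδ E C) :
    μ (closure E) = 0 := by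
  obtain ⟨σ, γ, hσ, hγ, hwp'⟩ := hwp
  obtain ⟨C, hC, hCd⟩ := hdbl
  obtain ⟨e₀, he₀⟩ := hE
  have hcl : closure E ⊆ ⋃ n : ℕ, closure E ∩ ball δ e₀ ((n:ℝ)+1) := by
    intro x hx
    obtain ⟨n, hn⟩ := exists_nat_gt (δ e₀ x)
    exact mem_iUnion.mpr ⟨n, hx, lt_trans hn (by linarith)⟩
  refine le_antisymm (le_trans (measure_mono hcl) ?_) zero_le
  exact le_of_eq (measure_iUnion_null fun n => key hd hδ hA hopenδ hequiv hβ hint ⟨e₀, he₀⟩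
    hσ hγ hwp' hC hCd e₀ ((n:ℝ)+1) (by positivity))

end WPA1
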